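/- Let p be a prime, let H be a subgroup of 𝔽_p^×, and let a ∈ 𝔽_p^×. Then |∑_{x∈H} e(ax/p)|⁴ ≤ p·|H|²; equivalently, |∑_{x∈H} e(ax/p)| ≤ p^{1/4}·|H|^{1/2}. -/

import Mathlib

/-- `eChar p x` is `e(x/p) = exp(2πi x̃/p)` where `x̃` is the integer representative of `x`. -/
noncomputable def eChar (p : ℕ) (x : ZMod p) : ℂ :=
  Complex.exp (2 * Real.pi * Complex.I * (x.val : ℂ) / p)

lemma eChar_eq_stdAddChar (p : ℕ) [NeZero p] (x : ZMod p) :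
    eChar p x = ZMod.stdAddChar x := by
  rw [ZMod.stdAddChar_apply, ZMod.toCircle_apply, eChar]

lemma abs_stdAddChar (p : ℕ) [NeZero p] (x : ZMod p) :
    ‖ZMod.stdAddChar x‖ = 1 := by
  rw [ZMod.stdAddChar_apply]; exact Circle.norm_coe (ZMod.toCircle x)

lemma conj_stdAddChar (p : ℕ) [NeZero p] (x : ZMod p) :
    (starRingEnd ℂ) (ZMod.stdAddChar x) = ZMod.stdAddChar (-x) := by
  have hne : ZMod.stdAddChar x ≠ 0 := by
    intro h; have := abs_stdAddChar p x; rw [h] at this; simp at this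
  have h1 : ZMod.stdAddChar x * ZMod.stdAddChar (-x) = 1 := by
    rw [← AddChar.map_add_eq_mul, add_neg_cancel, AddChar.map_zero_eq_one]
  have h2 : ZMod.stdAddChar x * (starRingEnd ℂ) (ZMod.stdAddChar x) = 1 := by
    rw [Complex.mul_conj, ← Complex.sq_norm, abs_stdAddChar]; norm_num
  exact mul_left_cancel₀ hne (h2.trans h1.symm)

open scoped Classical in
/-- For `p` prime, `H` a subgroup of `𝔽_p^×` and `a ∈ 𝔽_p^×`, one has
`|∑_{x∈H} e(ax/p)|⁴ ≤ p·|H|²`, equivalently `|∑_{x∈H} e(ax/p)| ≤ p^{1/4}·|H|^{1/2}`. -/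
theorem fourth_moment_subgroup_sum_bound (p : ℕ) [Fact p.Prime]
    (H : Subgroup (ZMod p)ˣ) (a : (ZMod p)ˣ) :
    ‖∑ x : H, eChar p ((a * (x : (ZMod p)ˣ) : (ZMod p)ˣ) : ZMod p)‖ ^ 4
        ≤ (p : ℝ) * (Nat.card H : ℝ) ^ 2 ∧
      ‖∑ x : H, eChar p ((a * (x : (ZMod p)ˣ) : (ZMod p)ˣ) : ZMod p)‖
        ≤ (p : ℝ) ^ ((1 : ℝ) / 4) * (Nat.card H : ℝ) ^ ((1 : ℝ) / 2) := by
  have hp : p.Prime := Fact.out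
  haveI : NeZero p := ⟨hp.ne_zero⟩
  set g : ZMod p → ℂ := fun b => ∑ x : H, ZMod.stdAddChar (b * ((x : (ZMod p)ˣ) : ZMod p))
    with hg
  -- the sum in the statement is g a
  have hS : ∑ x : H, eChar p ((a * (x : (ZMod p)ˣ) : (ZMod p)ˣ) : ZMod p)
      = g ((a : (ZMod p)ˣ) : ZMod p) := by
    refine Finset.sum_congr rfl fun x _ => ?_
    rw [eChar_eq_stdAddChar, Units.val_mul]
  -- second moment
  have key : ∑ b : ZMod p, ‖g b‖ ^ 2 = (p : ℝ) * (Fintype.card H : ℝ) := by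
    have keyC : ∑ b : ZMod p, g b * (starRingEnd ℂ) (g b)
        = (p : ℂ) * (Fintype.card H : ℂ) := by
      have hexp : ∀ b : ZMod p, g b * (starRingEnd ℂ) (g b)
          = ∑ x : H, ∑ y : H, ZMod.stdAddChar
              (b * (((x : (ZMod p)ˣ) : ZMod p) - ((y : (ZMod p)ˣ) : ZMod p))) := by
        intro b
        rw [hg]
        simp only
        rw [map_sum, Finset.sum_mul_sum]
        refine Finset.sum_congr rfl fun x _ => Finset.sum_congr rfl fun y _ => ?_
        rw [conj_stdAddChar, ← AddChar.map_add_eq_mul, ← sub_eq_add_neg, ← mul_sub]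
      calc ∑ b : ZMod p, g b * (starRingEnd ℂ) (g b)
          = ∑ b : ZMod p, ∑ x : H, ∑ y : H, ZMod.stdAddChar
              (b * (((x : (ZMod p)ˣ) : ZMod p) - ((y : (ZMod p)ˣ) : ZMod p))) :=
            Finset.sum_congr rfl fun b _ => hexp b
        _ = ∑ x : H, ∑ y : H, ∑ b : ZMod p, ZMod.stdAddChar
              (b * (((x : (ZMod p)ˣ) : ZMod p) - ((y : (ZMod p)ˣ) : ZMod p))) := by
            rw [Finset.sum_comm]
            exact Finset.sum_congr rfl fun x _ => Finset.sum_comm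
        _ = ∑ x : H, ∑ y : H, if x = y then ((p : ℂ)) else 0 := by
            refine Finset.sum_congr rfl fun x _ => Finset.sum_congr rfl fun y _ => ?_
            rw [AddChar.sum_mulShift _ (ZMod.isPrimitive_stdAddChar p), ZMod.card]
            have hcond : (((x : (ZMod p)ˣ) : ZMod p) - ((y : (ZMod p)ˣ) : ZMod p) = 0) ↔ x = y := by
              rw [sub_eq_zero]
              exact ⟨fun h => Subtype.ext (Units.ext h), fun h => by rw [h]⟩
            simp [hcond, apply_ite (Nat.cast : ℕ → ℂ)]
        _ = (p : ℂ) * (Fintype.card H : ℂ) := by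
            simp [Finset.sum_ite_eq, mul_comm]
    have : ((∑ b : ZMod p, ‖g b‖ ^ 2 : ℝ) : ℂ)
        = (((p : ℝ) * (Fintype.card H : ℝ) : ℝ) : ℂ) := by
      push_cast
      rw [← keyC]
      refine Finset.sum_congr rfl fun b _ => ?_
      rw [Complex.mul_conj, ← Complex.sq_norm]
      push_cast
      ring
    exact_mod_cast this
  -- coset invariance
  have hcoset : ∀ h : H, g ((a * (h : (ZMod p)ˣ) : (ZMod p)ˣ) : ZMod p)
      = g ((a : (ZMod p)ˣ) : ZMod p) := by
    intro h
    rw [hg]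
    simp only
    refine Fintype.sum_equiv (Equiv.mulLeft h) _ _ fun x => ?_
    simp [Units.val_mul, mul_assoc]
  -- injectivity of coset embedding
  have hinj : Function.Injective
      (fun h : H => ((a * (h : (ZMod p)ˣ) : (ZMod p)ˣ) : ZMod p)) := by
    intro x y hxy
    simp only at hxy
    have := Units.ext hxy
    exact Subtype.ext (mul_left_cancel this)
  -- card H > 0
  have hcardpos : (0:ℝ) < (Fintype.card H : ℝ) := by
    exact_mod_cast Fintype.card_pos
  -- second moment lower bound by coset
  have hlow : (Fintype.card H : ℝ) * ‖g ((a : (ZMod p)ˣ) : ZMod p)‖ ^ 2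
      ≤ ∑ b : ZMod p, ‖g b‖ ^ 2 := by
    calc (Fintype.card H : ℝ) * ‖g ((a : (ZMod p)ˣ) : ZMod p)‖ ^ 2
        = ∑ h : H, ‖g ((a * (h : (ZMod p)ˣ) : (ZMod p)ˣ) : ZMod p)‖ ^ 2 := by
          simp only [hcoset]
          rw [Finset.sum_const, nsmul_eq_mul]
          simp
      _ = ∑ b ∈ Finset.univ.image
            (fun h : H => ((a * (h : (ZMod p)ˣ) : (ZMod p)ˣ) : ZMod p)),
            ‖g b‖ ^ 2 := by
          rw [Finset.sum_image (fun x _ y _ h => hinj h)]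
      _ ≤ ∑ b : ZMod p, ‖g b‖ ^ 2 := by
          refine Finset.sum_le_sum_of_subset_of_nonneg (Finset.subset_univ _)
            (fun i _ _ => by positivity)
  -- |S|^2 ≤ p
  have hsq : ‖g ((a : (ZMod p)ˣ) : ZMod p)‖ ^ 2 ≤ (p : ℝ) := by
    rw [key] at hlow
    nlinarith
  -- |S| ≤ card H
  have htriv : ‖g ((a : (ZMod p)ˣ) : ZMod p)‖ ≤ (Fintype.card H : ℝ) := by
    rw [hg]
    simp only
    calc ‖∑ x : H, ZMod.stdAddChar (((a:(ZMod p)ˣ):ZMod p) * ((x : (ZMod p)ˣ) : ZMod p))‖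
        ≤ ∑ x : H, ‖ZMod.stdAddChar (((a:(ZMod p)ˣ):ZMod p) * ((x : (ZMod p)ˣ) : ZMod p))‖ :=
          norm_sum_le _ _
      _ = (Fintype.card H : ℝ) := by simp [abs_stdAddChar]
  rw [hS, Nat.card_eq_fintype_card]
  set x := ‖g ((a : (ZMod p)ˣ) : ZMod p)‖ with hx
  have hx0 : 0 ≤ x := norm_nonneg _
  set n : ℝ := (Fintype.card H : ℝ) with hn
  have h4 : x ^ 4 ≤ (p:ℝ) * n ^ 2 := by
    have h2n : x ^ 2 ≤ n ^ 2 := pow_le_pow_left₀ hx0 htriv 2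
    calc x ^ 4 = x ^ 2 * x ^ 2 := by ring
      _ ≤ (p:ℝ) * n ^ 2 := mul_le_mul hsq h2n (sq_nonneg x) (Nat.cast_nonneg p)
  refine ⟨h4, ?_⟩
  have hy4 : ((p:ℝ) ^ ((1:ℝ)/4) * n ^ ((1:ℝ)/2)) ^ 4 = (p:ℝ) * n ^ 2 := by
    have hp0 : (0:ℝ) ≤ (p:ℝ) := Nat.cast_nonneg p
    have hn0 : (0:ℝ) ≤ n := le_of_lt hcardpos
    rw [mul_pow, ← Real.rpow_natCast ((p:ℝ) ^ ((1:ℝ)/4)) 4,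
      ← Real.rpow_natCast (n ^ ((1:ℝ)/2)) 4,
      ← Real.rpow_mul hp0, ← Real.rpow_mul hn0]
    norm_num
  exact le_of_pow_le_pow_left₀ (n := 4) (by norm_num) (by positivity)
    (by rw [hy4]; exact h4)
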